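/- In the symmetric group S₁₀, the permutations σ₁ = (1 2 3 4 5 6), σ₂ = (1 7 8 3 5 9), σ₃ = (2 10 8 7 6 5), σ₄ = (1 9 4 3 8 10) each have cycle structure [1,1,1,1,6], satisfy σ₁·σ₂·σ₃·σ₄ = identity, and the subgroup they generate acts transitively on {1,…,10}. Hence there exists a transitive product-one tuple in S₁₀ of length 4 with ramification type [[1⁴,6]⁴]. -/

import Mathlib

/-- Cycle structure of a permutation of `Fin d`, including fixed points as 1-cycles. -/
def fullCycleType {d : ℕ} (σ : Equiv.Perm (Fin d)) : Multiset ℕ :=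
  σ.cycleType + Multiset.replicate (d - σ.cycleType.sum) 1

/-- Product of a list of permutations, composed left-to-right
(apply the first permutation first). -/
def seqProd {d : ℕ} (l : List (Equiv.Perm (Fin d))) : Equiv.Perm (Fin d) :=
  l.foldr (fun σ acc => σ.trans acc) (Equiv.refl (Fin d))


def σ1 : Equiv.Perm (Fin 10) := c[0, 1, 2, 3, 4, 5]

def σ2 : Equiv.Perm (Fin 10) := c[0, 6, 7, 2, 4, 8]

def σ3 : Equiv.Perm (Fin 10) := c[1, 9, 7, 6, 5, 4]

def σ4 : Equiv.Perm (Fin 10) := c[0, 8, 3, 2, 7, 9]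

lemma cyc_fct (l : List (Fin 10)) (hl : l.Nodup) (hn : l.length = 6)
    (hl' : (Cycle.ofList l).Nodup) :
    fullCycleType (Cycle.formPerm (Cycle.ofList l) hl')
      = ({1, 1, 1, 1, 6} : Multiset ℕ) := by
  have hc : (Cycle.formPerm (Cycle.ofList l) hl').IsCycle := by
    exact List.isCycle_formPerm hl (by omega)
  have hs : (Cycle.formPerm (Cycle.ofList l) hl').support = l.toFinset := by
    exact
      List.support_formPerm_of_nodup l hl (by rintro x rfl; simp at hn)
  have hct : (Cycle.formPerm (Cycle.ofList l) hl').cycleType = {6} := by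
    rw [hc.cycleType, hs, List.card_toFinset, hl.dedup, hn]
  rw [fullCycleType, hct]
  decide

lemma reach_zero (H : Subgroup (Equiv.Perm (Fin 10)))
    (h1 : σ1 ∈ H) (h2 : σ2 ∈ H) (h3 : σ3 ∈ H) :
    ∀ x : Fin 10, ∃ g ∈ H, g 0 = x := by
  intro x
  fin_cases x
  · exact ⟨1, H.one_mem, by decide⟩
  · exact ⟨σ1, h1, by decide⟩
  · exact ⟨σ1 ^ 2, H.pow_mem h1 2, by decide⟩
  · exact ⟨σ1 ^ 3, H.pow_mem h1 3, by decide⟩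
  · exact ⟨σ1 ^ 4, H.pow_mem h1 4, by decide⟩
  · exact ⟨σ1 ^ 5, H.pow_mem h1 5, by decide⟩
  · exact ⟨σ2, h2, by decide⟩
  · exact ⟨σ2 ^ 2, H.pow_mem h2 2, by decide⟩
  · exact ⟨σ2 ^ 5, H.pow_mem h2 5, by decide⟩
  · exact ⟨σ3 * σ1, H.mul_mem h3 h1, by decide⟩

lemma trans_aux (H : Subgroup (Equiv.Perm (Fin 10)))
    (h1 : σ1 ∈ H) (h2 : σ2 ∈ H) (h3 : σ3 ∈ H) :
    ∀ x y : Fin 10, ∃ g ∈ H, g x = y := by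
  intro x y
  obtain ⟨gx, hgx, hx⟩ := reach_zero H h1 h2 h3 x
  obtain ⟨gy, hgy, hy⟩ := reach_zero H h1 h2 h3 y
  refine ⟨gy * gx⁻¹, H.mul_mem hgy (H.inv_mem hgx), ?_⟩
  simp [← hx, ← hy]

set_option maxRecDepth 20000 in
theorem stmt12 :
    (fullCycleType σ1 = ({1, 1, 1, 1, 6} : Multiset ℕ) ∧ fullCycleType σ2 = ({1, 1, 1, 1, 6} : Multiset ℕ) ∧ fullCycleType σ3 = ({1, 1, 1, 1, 6} : Multiset ℕ) ∧ fullCycleType σ4 = ({1, 1, 1, 1, 6} : Multiset ℕ)) ∧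
    seqProd [σ1, σ2, σ3, σ4] = Equiv.refl (Fin 10) ∧
    (∀ x y : Fin 10, ∃ g ∈ Subgroup.closure ({σ1, σ2, σ3, σ4} : Set (Equiv.Perm (Fin 10))), g x = y) ∧
    (∃ τ : Fin 4 → Equiv.Perm (Fin 10),
      (∀ i, fullCycleType (τ i) = ({1, 1, 1, 1, 6} : Multiset ℕ)) ∧
      seqProd (List.ofFn τ) = Equiv.refl (Fin 10) ∧
      (∀ x y : Fin 10, ∃ g ∈ Subgroup.closure (Set.range τ), g x = y)) := by
  have hc1 : fullCycleType σ1 = ({1, 1, 1, 1, 6} : Multiset ℕ) := by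
    rw [σ1]; exact cyc_fct _ (by decide) (by decide) _
  have hc2 : fullCycleType σ2 = ({1, 1, 1, 1, 6} : Multiset ℕ) := by
    rw [σ2]; exact cyc_fct _ (by decide) (by decide) _
  have hc3 : fullCycleType σ3 = ({1, 1, 1, 1, 6} : Multiset ℕ) := by
    rw [σ3]; exact cyc_fct _ (by decide) (by decide) _
  have hc4 : fullCycleType σ4 = ({1, 1, 1, 1, 6} : Multiset ℕ) := by
    rw [σ4]; exact cyc_fct _ (by decide) (by decide) _
  have hp : seqProd [σ1, σ2, σ3, σ4] = Equiv.refl (Fin 10) := by decide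
  refine ⟨⟨hc1, hc2, hc3, hc4⟩, hp, ?_, ?_⟩
  · exact trans_aux _
      (Subgroup.subset_closure (Or.inl rfl))
      (Subgroup.subset_closure (Or.inr (Or.inl rfl)))
      (Subgroup.subset_closure (Or.inr (Or.inr (Or.inl rfl))))
  · refine ⟨![σ1, σ2, σ3, σ4], ?_, ?_, ?_⟩
    · intro i; fin_cases i
      exacts [hc1, hc2, hc3, hc4]
    · simpa using hp
    · exact trans_aux _
        (Subgroup.subset_closure ⟨0, rfl⟩) (Subgroup.subset_closure ⟨1, rfl⟩)
        (Subgroup.subset_closure ⟨2, rfl⟩)
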